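/- arXiv:math/0506350 — 2 statements merged into one kernel-verified Lean document; each statement's English description precedes it below -/
import Mathlib

section
/- Let E and F be p-dimensional real inner product spaces, let k be a symmetric bilinear form on F with k ≥ ⟨·,·⟩_F (i.e. k(v,v) ≥ ‖v‖² for all v ∈ F), let h be a positive semidefinite form on F with trace(h) ≤ 1, let h' be a positive semidefinite form on E with trace(h') ≤ 1, and let L : E → F be a linear map such that |k(L u, v)| ≤ c · h(v,v)^{1/2} · h'(u,u)^{1/2} for all u ∈ E, v ∈ F and some constant c > 0. Then |det L| ≤ (c/p)^p, where the determinant is computed with respect to orthonormal bases of E and F. -/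
open RealInnerProductSpace Matrix

open Finset in
private lemma amgm_aux {p : ℕ} (hp : 0 < p) (z : Fin p → ℝ) (hz : ∀ i, 0 ≤ z i)
    (hs : ∑ i, z i ≤ 1) : ∏ i, z i ≤ ((p : ℝ)⁻¹) ^ p := by
  have hp' : (0 : ℝ) < p := by exact_mod_cast hp
  have h1 : ∏ i, z i ^ ((p : ℝ)⁻¹) ≤ (p : ℝ)⁻¹ := by
    calc ∏ i, z i ^ ((p : ℝ)⁻¹) ≤ ∑ i, (p : ℝ)⁻¹ * z i :=
          Real.geom_mean_le_arith_mean_weighted _ _ _ (fun i _ => by positivity)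
            (by simp [Finset.card_fin]; field_simp) (fun i _ => hz i)
      _ = (p : ℝ)⁻¹ * ∑ i, z i := by rw [Finset.mul_sum]
      _ ≤ (p : ℝ)⁻¹ * 1 := by
          exact mul_le_mul_of_nonneg_left hs (by positivity)
      _ = (p : ℝ)⁻¹ := mul_one _
  have h2 : (∏ i, z i ^ ((p : ℝ)⁻¹)) ^ p ≤ ((p : ℝ)⁻¹) ^ p :=
    pow_le_pow_left₀ (Finset.prod_nonneg fun i _ => Real.rpow_nonneg (hz i) _) h1 p
  calc ∏ i, z i = (∏ i, z i ^ ((p : ℝ)⁻¹)) ^ p := by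
        rw [← Finset.prod_pow]
        refine Finset.prod_congr rfl fun i _ => ?_
        rw [← Real.rpow_natCast (z i ^ ((p : ℝ)⁻¹)) p, ← Real.rpow_mul (hz i),
          inv_mul_cancel₀ (ne_of_gt hp'), Real.rpow_one]
    _ ≤ ((p : ℝ)⁻¹) ^ p := h2

/-- Jacobian estimate in linear-algebraic form: if `k ≥ ⟨·,·⟩` on `F`, `h`, `h'` are
positive semidefinite with traces at most `1`, and
`|k(Lu,v)| ≤ c √h(v,v) √h'(u,u)`, then `|det L| ≤ (c/p)^p` with respect to
orthonormal bases. -/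
theorem stmt6 {E F : Type*} [NormedAddCommGroup E] [InnerProductSpace ℝ E]
    [NormedAddCommGroup F] [InnerProductSpace ℝ F] {p : ℕ} (hp : 0 < p)
    (hdimE : Module.finrank ℝ E = p) (hdimF : Module.finrank ℝ F = p)
    (k h : F →ₗ[ℝ] F →ₗ[ℝ] ℝ) (h' : E →ₗ[ℝ] E →ₗ[ℝ] ℝ)
    (hksymm : ∀ v w, k v w = k w v)
    (hk : ∀ v : F, ‖v‖ ^ 2 ≤ k v v)
    (hhsymm : ∀ v w, h v w = h w v) (hhpsd : ∀ v, 0 ≤ h v v)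
    (hh'symm : ∀ u w, h' u w = h' w u) (hh'psd : ∀ u, 0 ≤ h' u u)
    (htrh : ∀ b : OrthonormalBasis (Fin p) ℝ F, ∑ i, h (b i) (b i) ≤ 1)
    (htrh' : ∀ b : OrthonormalBasis (Fin p) ℝ E, ∑ i, h' (b i) (b i) ≤ 1)
    (c : ℝ) (hc : 0 < c) (L : E →ₗ[ℝ] F)
    (hcs : ∀ (u : E) (v : F), |k (L u) v| ≤ c * Real.sqrt (h v v) * Real.sqrt (h' u u)) :
    ∀ (bE : OrthonormalBasis (Fin p) ℝ E) (bF : OrthonormalBasis (Fin p) ℝ F),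
      |(LinearMap.toMatrix bE.toBasis bF.toBasis L).det| ≤ (c / (p : ℝ)) ^ p := by
  intro bE bF
  haveI : FiniteDimensional ℝ E := Module.finite_of_finrank_pos (hdimE ▸ hp)
  haveI : FiniteDimensional ℝ F := Module.finite_of_finrank_pos (hdimF ▸ hp)
  have hp' : (0 : ℝ) < p := by exact_mod_cast hp
  set M := LinearMap.toMatrix bE.toBasis bF.toBasis L with hM
  set T : E →ₗ[ℝ] E := LinearMap.adjoint L ∘ₗ L with hTdef
  have hT : T.IsSymmetric := by
    intro x y
    rw [hTdef]
    simp only [LinearMap.comp_apply]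
    rw [LinearMap.adjoint_inner_left, LinearMap.adjoint_inner_right]
  set e := hT.eigenvectorBasis hdimE with hedef
  set μ := hT.eigenvalues hdimE with hμdef
  have he : ∀ i, T (e i) = (μ i : ℝ) • e i := fun i => hT.apply_eigenvectorBasis hdimE i
  have hLe : ∀ i j, ⟪L (e i), L (e j)⟫ = if i = j then μ i else 0 := by
    intro i j
    have : ⟪L (e i), L (e j)⟫ = ⟪e i, T (e j)⟫ := by
      rw [hTdef]
      simp only [LinearMap.comp_apply]
      rw [LinearMap.adjoint_inner_right]
    rw [this, he j, real_inner_smul_right, orthonormal_iff_ite.mp e.orthonormal]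
    by_cases hij : i = j
    · subst hij; simp
    · simp [hij, Ne.symm hij]
  have hμnn : ∀ i, 0 ≤ μ i := by
    intro i
    have := hLe i i
    simp at this
    rw [← this]
    exact sq_nonneg _
  -- determinant squared equals product of eigenvalues
  have hdet2 : M.det ^ 2 = ∏ i, μ i := by
    have hMt : Mᴴ * M = LinearMap.toMatrix bE.toBasis bE.toBasis T := by
      rw [hTdef, hM]
      rw [LinearMap.toMatrix_comp bE.toBasis bF.toBasis bE.toBasis,
        LinearMap.toMatrix_adjoint]
    have h1 : M.det ^ 2 = (Mᴴ * M).det := by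
      rw [Matrix.det_mul, Matrix.det_conjTranspose]
      simp [sq, mul_comm]
    have h3 : LinearMap.det T = ∏ i, μ i := by
      rw [← LinearMap.det_toMatrix e.toBasis T]
      have : LinearMap.toMatrix e.toBasis e.toBasis T = Matrix.diagonal μ := by
        ext i j
        rw [LinearMap.toMatrix_apply]
        simp only [OrthonormalBasis.coe_toBasis]
        rw [he j, _root_.map_smul, ← OrthonormalBasis.coe_toBasis e, Module.Basis.repr_self]
        simp only [Finsupp.smul_apply, Finsupp.single_apply, Matrix.diagonal_apply,
          smul_eq_mul]
        by_cases hij : i = j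
        · subst hij; simp
        · simp [hij, Ne.symm hij]
      rw [this, Matrix.det_diagonal]
    rw [h1, hMt, LinearMap.det_toMatrix, h3]
  by_cases hdet0 : M.det = 0
  · rw [hdet0, abs_zero]
    positivity
  · have hprodμ : ∀ i, 0 < μ i := by
      intro i
      rcases lt_or_eq_of_le (hμnn i) with h1 | h1
      · exact h1
      · exfalso
        apply hdet0
        have : ∏ j, μ j = 0 := Finset.prod_eq_zero (Finset.mem_univ i) h1.symm
        have := hdet2.trans this
        exact pow_eq_zero_iff (two_ne_zero) |>.mp this
    set σ : Fin p → ℝ := fun i => Real.sqrt (μ i) with hσdef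
    have hσpos : ∀ i, 0 < σ i := fun i => Real.sqrt_pos.mpr (hprodμ i)
    have hσsq : ∀ i, σ i ^ 2 = μ i := fun i => Real.sq_sqrt (hμnn i)
    set f : Fin p → F := fun i => (σ i)⁻¹ • L (e i) with hfdef
    have hLef : ∀ i, L (e i) = σ i • f i := by
      intro i
      rw [hfdef]
      simp [smul_smul, mul_inv_cancel₀ (hσpos i).ne']
    have honf : Orthonormal ℝ f := by
      rw [orthonormal_iff_ite]
      intro i j
      rw [hfdef]
      simp only [real_inner_smul_left, real_inner_smul_right, hLe i j]
      by_cases hij : i = j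
      · subst hij
        simp only [if_pos rfl, if_true]
        have h1 : σ i ≠ 0 := (hσpos i).ne'
        rw [← hσsq i]
        field_simp [sq]
      · simp [hij]
    haveI : Nonempty (Fin p) := ⟨⟨0, hp⟩⟩
    have hcard : Fintype.card (Fin p) = Module.finrank ℝ F := by simp [hdimF]
    set bf : OrthonormalBasis (Fin p) ℝ F :=
      (basisOfOrthonormalOfCardEqFinrank honf hcard).toOrthonormalBasis
        (by rw [coe_basisOfOrthonormalOfCardEqFinrank]; exact honf) with hbf
    have hbff : ∀ i, bf i = f i := by
      intro i
      rw [hbf, Module.Basis.coe_toOrthonormalBasis, coe_basisOfOrthonormalOfCardEqFinrank]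
    -- key singular value bound
    have hkey : ∀ i, σ i ≤ c * Real.sqrt (h (f i) (f i)) * Real.sqrt (h' (e i) (e i)) := by
      intro i
      have h1 : σ i ^ 2 ≤ σ i * (c * Real.sqrt (h (f i) (f i)) * Real.sqrt (h' (e i) (e i))) := by
        have h2 : σ i ^ 2 = ‖L (e i)‖ ^ 2 := by
          rw [hσsq i, ← real_inner_self_eq_norm_sq, hLe i i]; simp
        have h3 : ‖L (e i)‖ ^ 2 ≤ k (L (e i)) (L (e i)) := hk _
        have h4 : k (L (e i)) (L (e i)) = σ i * k (L (e i)) (f i) := by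
          nth_rewrite 2 [hLef i]
          rw [LinearMap.map_smul, smul_eq_mul]
        have h5 : k (L (e i)) (f i) ≤ c * Real.sqrt (h (f i) (f i)) * Real.sqrt (h' (e i) (e i)) :=
          le_trans (le_abs_self _) (hcs (e i) (f i))
        calc σ i ^ 2 ≤ σ i * k (L (e i)) (f i) := by rw [h2]; rw [h4] at h3; exact h3
          _ ≤ σ i * (c * Real.sqrt (h (f i) (f i)) * Real.sqrt (h' (e i) (e i))) :=
              mul_le_mul_of_nonneg_left h5 (hσpos i).le
      nlinarith [h1, hσpos i]
    -- |det M| = ∏ σ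
    have habs : |M.det| = ∏ i, σ i := by
      have hps : ∏ i, μ i = (∏ i, σ i) ^ 2 := by
        rw [← Finset.prod_pow]
        exact Finset.prod_congr rfl fun i _ => (hσsq i).symm
      rw [← Real.sqrt_sq_eq_abs, hdet2, hps]
      exact Real.sqrt_sq (Finset.prod_nonneg fun i _ => (hσpos i).le)
    rw [habs]
    -- AM-GM bounds
    have hA : (∏ i, Real.sqrt (h (f i) (f i))) ^ 2 ≤ ((p : ℝ)⁻¹) ^ p := by
      rw [← Finset.prod_pow]
      calc ∏ i, Real.sqrt (h (f i) (f i)) ^ 2 = ∏ i, h (f i) (f i) :=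
            Finset.prod_congr rfl fun i _ => Real.sq_sqrt (hhpsd _)
        _ ≤ ((p : ℝ)⁻¹) ^ p := amgm_aux hp _ (fun i => hhpsd _) (by
            have := htrh bf
            simpa [hbff] using this)
    have hB : (∏ i, Real.sqrt (h' (e i) (e i))) ^ 2 ≤ ((p : ℝ)⁻¹) ^ p := by
      rw [← Finset.prod_pow]
      calc ∏ i, Real.sqrt (h' (e i) (e i)) ^ 2 = ∏ i, h' (e i) (e i) :=
            Finset.prod_congr rfl fun i _ => Real.sq_sqrt (hh'psd _)
        _ ≤ ((p : ℝ)⁻¹) ^ p := amgm_aux hp _ (fun i => hh'psd _) (htrh' e)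
    have hAn : 0 ≤ ∏ i, Real.sqrt (h (f i) (f i)) :=
      Finset.prod_nonneg fun i _ => Real.sqrt_nonneg _
    have hBn : 0 ≤ ∏ i, Real.sqrt (h' (e i) (e i)) :=
      Finset.prod_nonneg fun i _ => Real.sqrt_nonneg _
    have hAB : (∏ i, Real.sqrt (h (f i) (f i))) * (∏ i, Real.sqrt (h' (e i) (e i)))
        ≤ ((p : ℝ)⁻¹) ^ p := by
      nlinarith [hA, hB, hAn, hBn, sq_nonneg ((∏ i, Real.sqrt (h (f i) (f i))) -
        (∏ i, Real.sqrt (h' (e i) (e i)))), pow_pos (inv_pos.mpr hp') p]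
    calc ∏ i, σ i ≤ ∏ i, (c * Real.sqrt (h (f i) (f i)) * Real.sqrt (h' (e i) (e i))) :=
          Finset.prod_le_prod (fun i _ => (hσpos i).le) (fun i _ => hkey i)
      _ = c ^ p * ((∏ i, Real.sqrt (h (f i) (f i))) * (∏ i, Real.sqrt (h' (e i) (e i)))) := by
          rw [Finset.prod_mul_distrib, Finset.prod_mul_distrib]
          simp [Finset.prod_const, Finset.card_fin, mul_assoc]
      _ ≤ c ^ p * ((p : ℝ)⁻¹) ^ p := by
          exact mul_le_mul_of_nonneg_left hAB (by positivity)
      _ = (c / (p : ℝ)) ^ p := by rw [div_pow, ← mul_pow]; ring_nf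
end

section
/- Let a group C act by isometries on a metric space X̃, properly discontinuously, and let Z̃ ⊆ X̃ be a C-invariant subset. Suppose there exists a group Γ of isometries of X̃ containing C, acting cocompactly on X̃ (i.e. there is a compact K ⊆ X̃ with Γ·K = X̃), and a Γ-equivariant continuous map f̃ : X̃ → T to a metric space T on which Γ acts by isometries, such that Z̃ = f̃⁻¹(t₀), the Γ-orbit of t₀ is discrete in T, and the stabilizer of t₀ in Γ equals C. Then the quotient Z̃/C is compact, i.e. every sequence (z_n) in Z̃ has a subsequence (z_{n_k}) and elements γ_k ∈ C such that γ_k · z_{n_k} converges in X̃. -/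
/-- Lemma 2.3 of the paper: the level set `Z = f⁻¹(t₀)` of a `Γ`-equivariant
continuous map to a metric space with discrete orbit of `t₀` and stabilizer `C`
has compact quotient `Z/C`: every sequence in `Z` has a subsequence which converges
after translating by elements of `C`. -/
theorem stmt11 {Γ X T : Type*} [Group Γ] [MetricSpace X] [MetricSpace T]
    [MulAction Γ X] [MulAction Γ T]
    (hisoX : ∀ γ : Γ, Isometry fun x : X => γ • x)
    (hisoT : ∀ γ : Γ, Isometry fun t : T => γ • t)
    (C : Subgroup Γ) [ProperlyDiscontinuousSMul C X]
    (K : Set X) (hK : IsCompact K) (hcocpt : ∀ x : X, ∃ γ : Γ, γ • x ∈ K)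
    (f : X → T) (hf : Continuous f) (hequiv : ∀ (γ : Γ) (x : X), f (γ • x) = γ • f x)
    (t₀ : T) (horb : DiscreteTopology ↥(MulAction.orbit Γ t₀))
    (hstab : MulAction.stabilizer Γ t₀ = C)
    (Z : Set X) (hZ : Z = f ⁻¹' {t₀}) :
    ∀ z : ℕ → X, (∀ n, z n ∈ Z) →
      ∃ (φ : ℕ → ℕ) (γ : ℕ → C) (x : X), StrictMono φ ∧
        Filter.Tendsto (fun n => (γ n : Γ) • z (φ n)) Filter.atTop (nhds x) := by

  subst hZ
  intro z hz
  choose g hg using fun n => hcocpt (z n)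
  obtain ⟨x, hxK, φ, hφ, hlim⟩ := hK.tendsto_subseq hg
  have hfz : ∀ n, f (z n) = t₀ := fun n => hz n
  have ht : ∀ n, f (g n • z n) = g n • t₀ := by
    intro n; rw [hequiv, hfz]
  have hlimT : Filter.Tendsto (fun n => g (φ n) • t₀) Filter.atTop (nhds (f x)) := by
    have h2 := (hf.tendsto x).comp hlim
    have h3 : (fun n => g (φ n) • t₀) = f ∘ (fun n => g n • z n) ∘ φ := by
      funext n; simp [Function.comp, ht]
    rwa [h3]
  have ht₀ : t₀ ∈ MulAction.orbit Γ t₀ := MulAction.mem_orbit_self t₀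
  have hopen : IsOpen ({⟨t₀, ht₀⟩} : Set (MulAction.orbit Γ t₀)) := isOpen_discrete _
  obtain ⟨ε, hε, hball⟩ := Metric.isOpen_iff.mp hopen ⟨t₀, ht₀⟩ rfl
  have hsep : ∀ γ δ : Γ, dist (γ • t₀) (δ • t₀) < ε → γ • t₀ = δ • t₀ := by
    intro γ δ hd
    have h1 : dist ((γ⁻¹ * δ) • t₀) t₀ < ε := by
      have h2 := (hisoT γ⁻¹).dist_eq (γ • t₀) (δ • t₀)
      simp only [smul_smul, inv_mul_cancel, one_smul] at h2
      rw [← h2] at hd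
      simpa [mul_smul, dist_comm] using hd
    have hmem : (⟨(γ⁻¹ * δ) • t₀, MulAction.mem_orbit t₀ _⟩ : MulAction.orbit Γ t₀)
        ∈ Metric.ball (⟨t₀, ht₀⟩ : MulAction.orbit Γ t₀) ε := by
      simpa [Metric.mem_ball, Subtype.dist_eq] using h1
    have heq : (γ⁻¹ * δ) • t₀ = t₀ := by
      have := hball hmem
      simpa [Subtype.ext_iff] using this
    have := congrArg (fun s => γ • s) heq
    simpa [smul_smul, mul_assoc] using this.symm
  obtain ⟨N, hN⟩ := Metric.cauchySeq_iff'.mp hlimT.cauchySeq ε hε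
  have hconst : ∀ n, g (φ (n + N)) • t₀ = g (φ N) • t₀ := by
    intro n
    exact hsep _ _ (hN (n + N) (Nat.le_add_left N n))
  have hmemC : ∀ n, (g (φ N))⁻¹ * g (φ (n + N)) ∈ C := by
    intro n
    rw [← hstab, MulAction.mem_stabilizer_iff, mul_smul, hconst, inv_smul_smul]
  refine ⟨fun n => φ (n + N), fun n => ⟨_, hmemC n⟩, (g (φ N))⁻¹ • x,
    hφ.comp fun a b h => by omega, ?_⟩
  have h3 : Filter.Tendsto (fun n => g (φ (n + N)) • z (φ (n + N)))
      Filter.atTop (nhds x) := hlim.comp (Filter.tendsto_add_atTop_nat N)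
  have h4 := (((hisoX (g (φ N))⁻¹).continuous.tendsto x).comp h3)
  simpa [Function.comp_def, mul_smul] using h4
end
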